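/- arXiv:2301.00035 — 2 statements merged into one kernel-verified Lean document; each statement's English description precedes it below -/
import Mathlib

section
/- In the centralizer g_0^f = {y ∈ g_0 : [f, y] = 0}, the elements W̄^{(1)}_{p,q} := Σ_{(i,j): row(i)=p, row(j)=q, col(i)=col(j)} e_{i,j}, for q_l < p = q ≤ q_1 or 1 ≤ p,q ≤ q_l, indeed satisfy [f, W̄^{(1)}_{p,q}] = 0. -/
open Matrix

/-- Index set for `gl(N)` in the pyramid setup: pairs (column, row);
`col ⟨r,p⟩ = r` (0-based), `row ⟨r,p⟩ = p + 1` (1-based). -/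
abbrev PyrIdx (l : ℕ) (q : Fin l → ℕ) := Σ r : Fin l, Fin (q r)

/-- The nilpotent element `f = Σ_j e_{ĵ,j}` (sum over `j` for which `ĵ` exists). -/
noncomputable def pyrF (l : ℕ) (q : Fin l → ℕ) :
    Matrix (PyrIdx l q) (PyrIdx l q) ℂ :=
  ∑ i : PyrIdx l q, ∑ j : PyrIdx l q,
    if ((i.1 : ℕ) = (j.1 : ℕ) + 1 ∧ (i.2 : ℕ) = (j.2 : ℕ)) then
      Matrix.single i j 1 else 0

/-- `W̄^{(1)}_{p,qq} = Σ_{(i,j): row(i)=p, row(j)=qq, col(i)=col(j)} e_{i,j}`. -/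
noncomputable def Wbar (l : ℕ) (q : Fin l → ℕ) (p qq : ℕ) :
    Matrix (PyrIdx l q) (PyrIdx l q) ℂ :=
  ∑ i : PyrIdx l q, ∑ j : PyrIdx l q,
    if (i.1 = j.1 ∧ (i.2 : ℕ) + 1 = p ∧ (j.2 : ℕ) + 1 = qq) then
      Matrix.single i j 1 else 0

lemma pyrF_apply (l : ℕ) (q : Fin l → ℕ) (a b : PyrIdx l q) :
    pyrF l q a b = if ((a.1 : ℕ) = (b.1 : ℕ) + 1 ∧ (a.2 : ℕ) = (b.2 : ℕ)) then 1 else 0 := by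
  simp only [pyrF, Matrix.sum_apply, Matrix.single, of_apply]
  rw [Finset.sum_eq_single a, Finset.sum_eq_single b]
  · split <;> simp
  · intro c _ hc; split <;> simp [hc]
  · simp
  · intro c _ hc
    rw [Finset.sum_eq_zero]
    intro d _
    split <;> simp [hc]
  · simp

lemma Wbar_apply (l : ℕ) (q : Fin l → ℕ) (p qq : ℕ) (a b : PyrIdx l q) :
    Wbar l q p qq a b =
      if (a.1 = b.1 ∧ (a.2 : ℕ) + 1 = p ∧ (b.2 : ℕ) + 1 = qq) then 1 else 0 := by
  simp only [Wbar, Matrix.sum_apply, Matrix.single, of_apply]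
  rw [Finset.sum_eq_single a, Finset.sum_eq_single b]
  · split <;> simp
  · intro c _ hc; split <;> simp [hc]
  · simp
  · intro c _ hc
    rw [Finset.sum_eq_zero]
    intro d _
    split <;> simp [hc]
  · simp

/-- For `q_l < p = qq ≤ q_1` or `1 ≤ p, qq ≤ q_l`, the element `W̄^{(1)}_{p,qq} ∈ g_0`
centralizes `f`: `[f, W̄^{(1)}_{p,qq}] = 0`. -/
theorem stmt10 (l : ℕ) (hl : 0 < l) (q : Fin l → ℕ) (hq : Antitone q)
    (hq1 : ∀ r, 1 ≤ q r) (p qq : ℕ)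
    (hpq : (q ⟨l - 1, by omega⟩ < p ∧ p = qq ∧ p ≤ q ⟨0, hl⟩) ∨
      (1 ≤ p ∧ p ≤ q ⟨l - 1, by omega⟩ ∧ 1 ≤ qq ∧ qq ≤ q ⟨l - 1, by omega⟩)) :
    ⁅pyrF l q, Wbar l q p qq⁆ = 0 := by
  have key1 : ∀ a b : PyrIdx l q,
      ∑ c : PyrIdx l q, pyrF l q a c * Wbar l q p qq c b =
      if ((a.1 : ℕ) = (b.1 : ℕ) + 1 ∧ (a.2 : ℕ) + 1 = p ∧ (b.2 : ℕ) + 1 = qq)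
        then (1 : ℂ) else 0 := by
    intro a b
    by_cases h : (a.1 : ℕ) = (b.1 : ℕ) + 1 ∧ (a.2 : ℕ) + 1 = p ∧ (b.2 : ℕ) + 1 = qq
    · obtain ⟨h1, h2, h3⟩ := h
      have hab : b.1 ≤ a.1 := Fin.le_def.mpr (by omega)
      have hc1 : (a.2 : ℕ) < q b.1 := lt_of_lt_of_le a.2.isLt (hq hab)
      rw [if_pos ⟨h1, h2, h3⟩,
        Finset.sum_eq_single (⟨b.1, ⟨(a.2 : ℕ), hc1⟩⟩ : PyrIdx l q)]
      · simp [pyrF_apply, Wbar_apply, h1, h2, h3]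
      · rintro ⟨r, x⟩ - hne
        simp only [pyrF_apply, Wbar_apply, ite_mul, one_mul, zero_mul]
        split_ifs with hA hB <;> try rfl
        exfalso
        obtain rfl := hB.1
        exact hne (congrArg (Sigma.mk b.1) (Fin.ext hA.2.symm))
      · intro hmem; exact absurd (Finset.mem_univ _) hmem
    · rw [if_neg h, Finset.sum_eq_zero]
      rintro ⟨r, x⟩ -
      simp only [pyrF_apply, Wbar_apply, ite_mul, one_mul, zero_mul]
      split_ifs with hA hB <;> try rfl
      exfalso
      apply h
      have := congrArg Fin.val hB.1
      refine ⟨by omega, by omega, hB.2.2⟩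
  have key2 : ∀ a b : PyrIdx l q,
      ∑ c : PyrIdx l q, Wbar l q p qq a c * pyrF l q c b =
      if ((a.1 : ℕ) = (b.1 : ℕ) + 1 ∧ (a.2 : ℕ) + 1 = p ∧ (b.2 : ℕ) + 1 = qq)
        then (1 : ℂ) else 0 := by
    intro a b
    by_cases h : (a.1 : ℕ) = (b.1 : ℕ) + 1 ∧ (a.2 : ℕ) + 1 = p ∧ (b.2 : ℕ) + 1 = qq
    · obtain ⟨h1, h2, h3⟩ := h
      have hqa : qq ≤ q a.1 := by
        rcases hpq with ⟨hA, rfl, hC⟩ | ⟨_, _, _, h4⟩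
        · have := a.2.isLt; omega
        · have hlt := a.1.isLt
          have hle : a.1 ≤ ⟨l - 1, by omega⟩ :=
            Fin.le_def.mpr (show (a.1 : ℕ) ≤ l - 1 by omega)
          exact le_trans h4 (hq hle)
      have hc2 : (b.2 : ℕ) < q a.1 := by omega
      rw [if_pos ⟨h1, h2, h3⟩,
        Finset.sum_eq_single (⟨a.1, ⟨(b.2 : ℕ), hc2⟩⟩ : PyrIdx l q)]
      · simp [pyrF_apply, Wbar_apply, h1, h2, h3]
      · rintro ⟨r, x⟩ - hne
        simp only [pyrF_apply, Wbar_apply, ite_mul, one_mul, zero_mul]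
        split_ifs with hA hB <;> try rfl
        exfalso
        obtain rfl := hA.1
        exact hne (congrArg (Sigma.mk a.1) (Fin.ext hB.2))
      · intro hmem; exact absurd (Finset.mem_univ _) hmem
    · rw [if_neg h, Finset.sum_eq_zero]
      rintro ⟨r, x⟩ -
      simp only [pyrF_apply, Wbar_apply, ite_mul, one_mul, zero_mul]
      split_ifs with hA hB <;> try rfl
      exfalso
      apply h
      have := congrArg Fin.val hA.1
      refine ⟨by omega, hA.2.1, by omega⟩
  rw [Ring.lie_def, sub_eq_zero]
  ext a b
  rw [mul_apply, mul_apply, key1, key2]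
end

section
/- For the Borcherds Lie algebra L(V) = (V ⊗ ℂ[t,t^{-1}])/Im(∂⊗id + id⊗d/dt) of a vertex algebra V, the bracket [u t^a, v t^b] = Σ_{r≥0} C(a,r) (u_{(r)} v) t^{a+b−r} is antisymmetric modulo the image of ∂⊗id + id⊗d/dt; i.e., [u t^a, v t^b] + [v t^b, u t^a] ∈ Im(∂⊗id + id⊗d/dt). -/
open Finset

/-- The generalized binomial coefficient `C(a, r) = a(a−1)⋯(a−r+1)/r!` for `a : ℤ`. -/
noncomputable def genChoose (a : ℤ) (r : ℕ) : ℂ :=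
  (∏ k ∈ Finset.range r, ((a : ℂ) - (k : ℂ))) / (r.factorial : ℂ)

/-- The operator `∂⊗id + id⊗(d/dt)` on `V ⊗ ℂ[t,t⁻¹]`, realized on `ℤ →₀ V`
(where `Finsupp.single a v` stands for `v ⊗ t^a`). -/
noncomputable def borchD (V : Type*) [AddCommGroup V] [Module ℂ V]
    (T : V →ₗ[ℂ] V) : (ℤ →₀ V) →ₗ[ℂ] (ℤ →₀ V) :=
  Finsupp.lsum ℂ fun a => (Finsupp.lsingle a).comp T + (a : ℂ) • Finsupp.lsingle (a - 1)

lemma descPoch_smeval_complex (x : ℂ) : ∀ r : ℕ,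
    (descPochhammer ℤ r).smeval x = ∏ k ∈ Finset.range r, (x - k)
  | 0 => by simp [descPochhammer_zero, Polynomial.smeval_one]
  | (r+1) => by
      rw [descPochhammer_succ_right, Polynomial.smeval_mul, descPoch_smeval_complex x r,
        prod_range_succ, Polynomial.smeval_sub, Polynomial.smeval_X, Polynomial.smeval_natCast]
      simp

lemma genChoose_eq (a : ℤ) (r : ℕ) : genChoose a r = Ring.choose ((a : ℂ)) r := by
  have h := Ring.descPochhammer_eq_factorial_smul_choose ((a : ℂ)) r
  rw [descPoch_smeval_complex] at h
  have hfac : (r.factorial : ℂ) ≠ 0 := Nat.cast_ne_zero.mpr r.factorial_ne_zero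
  rw [genChoose, h, nsmul_eq_mul]
  field_simp

lemma alt_sum_choose_complex (k : ℕ) :
    (∑ r ∈ range (k+1), ((-1:ℂ))^r * (Nat.choose k r : ℂ)) = if k = 0 then 1 else 0 := by
  have h := congrArg (Int.cast : ℤ → ℂ) (Int.alternating_sum_range_choose (n := k))
  push_cast at h
  split_ifs with hk <;> simp_all

lemma vandermonde_complex (A B : ℂ) (m : ℕ) :
    ∑ r ∈ range (m+1), ((-1:ℂ))^r * Ring.choose A r * Ring.choose (A + B - r) (m - r)
      = Ring.choose B m := by
  have step1 : ∀ r ∈ range (m+1),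
      ((-1:ℂ))^r * Ring.choose A r * Ring.choose (A + B - r) (m - r)
        = ∑ s ∈ range ((m - r) + 1),
            ((-1:ℂ))^r * (Nat.choose (r+s) r : ℂ) * Ring.choose A (r+s)
              * Ring.choose B (m - r - s) := by
    intro r hr
    have hAB : A + B - r = (A - r) + B := by ring
    rw [hAB, Ring.add_choose_eq _ (Commute.all _ _),
      Finset.Nat.sum_antidiagonal_eq_sum_range_succ_mk, Nat.succ_eq_add_one, mul_sum]
    refine sum_congr rfl fun s hs => ?_
    have h1 := Ring.choose_smul_choose A (n := r+s) (k := r) (Nat.le_add_right r s)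
    rw [nsmul_eq_mul, Nat.add_sub_cancel_left] at h1
    push_cast at h1 ⊢
    calc ((-1:ℂ))^r * Ring.choose A r * (Ring.choose (A - r) s * Ring.choose B (m - r - s))
        = ((-1:ℂ))^r * (Ring.choose A r * Ring.choose (A - r) s) * Ring.choose B (m - r - s) := by
          ring
      _ = ((-1:ℂ))^r * ((Nat.choose (r+s) r : ℂ) * Ring.choose A (r+s))
            * Ring.choose B (m - r - s) := by rw [← h1]
      _ = ((-1:ℂ))^r * (Nat.choose (r+s) r : ℂ) * Ring.choose A (r+s)
            * Ring.choose B (m - r - s) := by ring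
  rw [sum_congr rfl step1]
  have hflip := Finset.sum_range_diag_flip (m+1)
    (fun r s => ((-1:ℂ))^r * (Nat.choose (r+s) r : ℂ) * Ring.choose A (r+s)
      * Ring.choose B (m - r - s))
  have hrange : ∀ r ∈ range (m+1), ((m+1) - r) = (m - r) + 1 := by
    intro r hr; rw [mem_range] at hr; omega
  rw [show (∑ r ∈ range (m+1), ∑ s ∈ range ((m - r) + 1),
        ((-1:ℂ))^r * (Nat.choose (r+s) r : ℂ) * Ring.choose A (r+s)
          * Ring.choose B (m - r - s))
      = ∑ r ∈ range (m+1), ∑ s ∈ range ((m+1) - r),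
        ((-1:ℂ))^r * (Nat.choose (r+s) r : ℂ) * Ring.choose A (r+s)
          * Ring.choose B (m - r - s) from
    sum_congr rfl fun r hr => by rw [hrange r hr]]
  rw [← hflip]
  have step2 : ∀ k ∈ range (m+1),
      (∑ r ∈ range (k+1),
        ((-1:ℂ))^r * (Nat.choose (r + (k - r)) r : ℂ) * Ring.choose A (r + (k - r))
          * Ring.choose B (m - r - (k - r)))
      = (∑ r ∈ range (k+1), ((-1:ℂ))^r * (Nat.choose k r : ℂ))
          * (Ring.choose A k * Ring.choose B (m - k)) := by
    intro k hk
    rw [sum_mul]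
    refine sum_congr rfl fun r hr => ?_
    rw [mem_range] at hr
    have h1 : r + (k - r) = k := by omega
    have h2 : m - r - (k - r) = m - k := by rw [mem_range] at hk; omega
    rw [h1, h2]; ring
  rw [sum_congr rfl step2]
  rw [show (∑ k ∈ range (m+1), (∑ r ∈ range (k+1), ((-1:ℂ))^r * (Nat.choose k r : ℂ))
        * (Ring.choose A k * Ring.choose B (m - k)))
      = ∑ k ∈ range (m+1), (if k = 0 then (1:ℂ) else 0)
        * (Ring.choose A k * Ring.choose B (m - k)) from
    sum_congr rfl fun k _ => by rw [alt_sum_choose_complex]]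
  simp [ite_mul, Ring.choose_zero_right]

lemma vandermonde_genChoose (a b : ℤ) (m : ℕ) :
    ∑ r ∈ range (m+1), ((-1:ℂ))^r * genChoose a r * genChoose (a + b - (r:ℤ)) (m - r)
      = genChoose b m := by
  have hv := vandermonde_complex (a : ℂ) (b : ℂ) m
  rw [genChoose_eq b m, ← hv]
  refine sum_congr rfl fun r hr => ?_
  rw [genChoose_eq, genChoose_eq,
    show ((a + b - (r:ℤ) : ℤ) : ℂ) = (a:ℂ) + (b:ℂ) - (r:ℕ) by push_cast; ring]

/-- In the Borcherds Lie algebra `L(V) = (V ⊗ ℂ[t,t⁻¹]) / Im(∂⊗id + id⊗d/dt)`,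
the bracket `[u t^a, v t^b] = Σ_{r≥0} C(a,r) (u_{(r)}v) t^{a+b−r}` is antisymmetric
modulo the image of `∂⊗id + id⊗d/dt`:
`[u t^a, v t^b] + [v t^b, u t^a] ∈ Im(∂⊗id + id⊗d/dt)`. -/
theorem stmt13 (V : Type*) [AddCommGroup V] [Module ℂ V]
    (T : V →ₗ[ℂ] V)                -- the translation operator ∂
    (mul : ℕ → V → V → V)          -- the n-th products u_{(n)}v
    (u v : V) (a b : ℤ) (N : ℕ)
    -- `u_{(r)}v = 0` for `r` large
    (hvan : ∀ r, N ≤ r → mul r u v = 0 ∧ mul r v u = 0)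
    -- skew-symmetry `u_{(n)}v = −Σ_{j≥0} (−1)^{n+j} ∂^{(j)}(v_{(n+j)}u)`
    (hskew1 : ∀ n : ℕ, mul n u v =
      -∑ j ∈ Finset.range N, ((-1 : ℂ) ^ (n + j) * ((j.factorial : ℂ)⁻¹)) •
        ((T ^ j) (mul (n + j) v u)))
    (hskew2 : ∀ n : ℕ, mul n v u =
      -∑ j ∈ Finset.range N, ((-1 : ℂ) ^ (n + j) * ((j.factorial : ℂ)⁻¹)) •
        ((T ^ j) (mul (n + j) u v))) :
    (∑ r ∈ Finset.range N, genChoose a r • Finsupp.single (a + b - (r : ℤ)) (mul r u v))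
    + (∑ r ∈ Finset.range N, genChoose b r • Finsupp.single (a + b - (r : ℤ)) (mul r v u))
    ∈ LinearMap.range (borchD V T) := by
  set P : Submodule ℂ (ℤ →₀ V) := LinearMap.range (borchD V T) with hP
  rw [← Submodule.Quotient.mk_eq_zero P]
  set π : (ℤ →₀ V) →ₗ[ℂ] ((ℤ →₀ V) ⧸ P) := P.mkQ with hπ
  have hD : ∀ (c : ℤ) (w : V), borchD V T (Finsupp.single c w)
      = Finsupp.single c (T w) + (c : ℂ) • Finsupp.single (c - 1) w := by
    intro c w
    simp [borchD]
  have hπ0 : ∀ x ∈ P, π x = 0 := fun x hx => (Submodule.Quotient.mk_eq_zero P).mpr hx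
  have K1 : ∀ (c : ℤ) (w : V),
      π (Finsupp.single c (T w)) = (-(c : ℂ)) • π (Finsupp.single (c - 1) w) := by
    intro c w
    have h0 : π (borchD V T (Finsupp.single c w)) = 0 :=
      hπ0 _ ⟨Finsupp.single c w, rfl⟩
    rw [hD, map_add, map_smul] at h0
    have := eq_neg_of_add_eq_zero_left h0
    rw [this, neg_smul]
  have K2 : ∀ (j : ℕ) (c : ℤ) (w : V),
      π (Finsupp.single c ((T ^ j) w))
        = (((-1:ℂ))^j * ∏ k ∈ range j, ((c : ℂ) - k)) • π (Finsupp.single (c - j) w) := by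
    intro j
    induction j with
    | zero => intro c w; simp
    | succ j ih =>
      intro c w
      have hTw : (T ^ (j+1)) w = (T ^ j) (T w) := by
        rw [pow_succ]; rfl
      rw [hTw, ih c (T w), K1 (c - j) w]
      rw [smul_smul]
      have hidx : c - (j : ℤ) - 1 = c - ((j:ℕ)+1 : ℕ) := by push_cast; ring
      rw [hidx]
      congr 1
      rw [prod_range_succ]
      push_cast
      ring
  -- abbreviation
  set X : ℕ → ((ℤ →₀ V) ⧸ P) :=
    fun m => π (Finsupp.single (a + b - (m : ℤ)) (mul m v u)) with hX
  have hXzero : ∀ m, N ≤ m → X m = 0 := by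
    intro m hm
    rw [hX]; simp [(hvan m hm).2]
  have step1 : ∀ r : ℕ, π (Finsupp.single (a + b - (r : ℤ)) (mul r u v))
      = -∑ j ∈ range N, (((-1:ℂ))^r * genChoose (a + b - (r:ℤ)) j) • X (r + j) := by
    intro r
    set c : ℤ := a + b - (r : ℤ) with hc
    set L : V →ₗ[ℂ] ((ℤ →₀ V) ⧸ P) := π.comp (Finsupp.lsingle c) with hL
    have hLs : ∀ x : V, π (Finsupp.single c x) = L x := fun x => rfl
    rw [hLs, hskew1 r, map_neg, map_sum]
    congr 1
    refine sum_congr rfl fun j hj => ?_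
    rw [map_smul, ← hLs, K2 j c (mul (r + j) v u)]
    have hidx : c - (j : ℤ) = a + b - ((r + j : ℕ) : ℤ) := by rw [hc]; push_cast; ring
    rw [hidx, smul_smul]
    have hfac : (j.factorial : ℂ) ≠ 0 := Nat.cast_ne_zero.mpr j.factorial_ne_zero
    congr 1
    rw [genChoose]
    have hsign : ((-1:ℂ))^(r+j) * ((-1:ℂ))^j = ((-1:ℂ))^r := by
      rw [pow_add, mul_assoc, ← mul_pow]; norm_num
    rw [div_eq_mul_inv, ← hsign]
    ring
  -- the double sum identity
  have key : ∑ r ∈ range N, ∑ j ∈ range N,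
        (genChoose a r * (((-1:ℂ))^r * genChoose (a + b - (r:ℤ)) j)) • X (r + j)
      = ∑ m ∈ range N, genChoose b m • X m := by
    have h1 : ∀ r ∈ range N,
        (∑ j ∈ range N,
          (genChoose a r * (((-1:ℂ))^r * genChoose (a + b - (r:ℤ)) j)) • X (r + j))
        = ∑ j ∈ range (N - r),
          (genChoose a r * (((-1:ℂ))^r * genChoose (a + b - (r:ℤ)) j)) • X (r + j) := by
      intro r hr
      refine (sum_subset (range_subset_range.2 (Nat.sub_le N r)) fun j hj hj' => ?_).symm
      rw [mem_range] at hj hj'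
      have : N ≤ r + j := by omega
      rw [hXzero _ this, smul_zero]
    rw [sum_congr rfl h1,
      ← Finset.sum_range_diag_flip N
        (fun r j => (genChoose a r * (((-1:ℂ))^r * genChoose (a + b - (r:ℤ)) j)) • X (r + j))]
    refine sum_congr rfl fun m hm => ?_
    have h2 : ∀ r ∈ range (m+1),
        (genChoose a r * (((-1:ℂ))^r * genChoose (a + b - (r:ℤ)) (m - r))) • X (r + (m - r))
        = (((-1:ℂ))^r * genChoose a r * genChoose (a + b - (r:ℤ)) (m - r)) • X m := by
      intro r hr
      rw [mem_range] at hr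
      have : r + (m - r) = m := by omega
      rw [this]
      ring_nf
    rw [sum_congr rfl h2, ← Finset.sum_smul, vandermonde_genChoose a b m]
  -- put everything together
  rw [← Submodule.mkQ_apply, ← hπ, map_add, map_sum, map_sum]
  have hfirst : ∀ r ∈ range N,
      π (genChoose a r • Finsupp.single (a + b - (r : ℤ)) (mul r u v))
      = -∑ j ∈ range N,
          (genChoose a r * (((-1:ℂ))^r * genChoose (a + b - (r:ℤ)) j)) • X (r + j) := by
    intro r hr
    rw [map_smul, step1 r, smul_neg, smul_sum]
    congr 1
    exact sum_congr rfl fun j _ => by rw [smul_smul]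
  have hsecond : ∀ r ∈ range N,
      π (genChoose b r • Finsupp.single (a + b - (r : ℤ)) (mul r v u))
      = genChoose b r • X r := by
    intro r hr
    rw [map_smul]
  rw [sum_congr rfl hfirst, sum_congr rfl hsecond, sum_neg_distrib]
  rw [key]
  exact neg_add_cancel _
end
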